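/- Let k ≥ 2, let (x_n)_{n≥1} ⊆ [0,1] be any sequence, and let s_1 ≥ s_2 ≥ … ≥ s_{k-1} > 0. With the convention R_1(N) = 1, there exist positive integers b_1,…,b_{k-1} depending only on k (namely the Stirling numbers of the second kind b_m = S(k,m)) such that for all N ≥ 1: R_k^*(s_1,…,s_{k-1},N) ≤ R_k(s_1,…,s_{k-1},N) + Σ_{m=1}^{k-1} b_m·R_m(s_1,…,s_{m-1},N). -/

import Mathlib

open Finset Filter MeasureTheory
open scoped Classical ENNReal NNReal

/-- Distance from `x` to the nearest integer. -/
noncomputable def nint (x : ℝ) : ℝ := |x - round x|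

/-- Signed distance from `x` to the origin modulo 1. -/
noncomputable def sdist (x : ℝ) : ℝ :=
  if Int.fract x ≤ 1 / 2 then Int.fract x else Int.fract x - 1

/-- Number of `k`-tuples of pairwise distinct indices in `{1,…,N}` whose rescaled signed
differences lie in the box `∏ r, [a r, b r]`. -/
noncomputable def corrBoxCount (x : ℕ → ℝ) (k N : ℕ) (a b : Fin (k - 1) → ℝ) : ℕ :=
  ((Fintype.piFinset fun _ : Fin k => Finset.Icc 1 N).filter fun i =>
    Function.Injective i ∧ ∀ r : Fin (k - 1),
      (N : ℝ) * sdist (x (i ⟨0, by have := r.2; omega⟩) - x (i ⟨r.1 + 1, by have := r.2; omega⟩))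
        ∈ Set.Icc (a r) (b r)).card

/-- The sequence `x` (indexed by `n ≥ 1`) has Poissonian correlations of order `k`. -/
def HasPoissonianCorr (x : ℕ → ℝ) (k : ℕ) : Prop :=
  ∀ a b : Fin (k - 1) → ℝ, (∀ r, a r ≤ b r) →
    Tendsto (fun N : ℕ => (corrBoxCount x k N a b : ℝ) / N) atTop
      (nhds (∏ r, (b r - a r)))

/-- The `k`-th order correlation function `R_k(s₁,…,s_{k-1},N)` (pairwise distinct indices). -/
noncomputable def Rcorr (x : ℕ → ℝ) (k N : ℕ) (s : Fin (k - 1) → ℝ) : ℝ :=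
  (((Fintype.piFinset fun _ : Fin k => Finset.Icc 1 N).filter fun i =>
    Function.Injective i ∧ ∀ r : Fin (k - 1),
      nint (x (i ⟨0, by have := r.2; omega⟩) - x (i ⟨r.1 + 1, by have := r.2; omega⟩))
        ≤ s r / N).card : ℝ) / N

/-- The `k`-th order correlation function `R_k^*(s₁,…,s_{k-1},N)` (indices not necessarily
distinct). -/
noncomputable def RcorrStar (x : ℕ → ℝ) (k N : ℕ) (s : Fin (k - 1) → ℝ) : ℝ :=
  (((Fintype.piFinset fun _ : Fin k => Finset.Icc 1 N).filter fun i =>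
    ∀ r : Fin (k - 1),
      nint (x (i ⟨0, by have := r.2; omega⟩) - x (i ⟨r.1 + 1, by have := r.2; omega⟩))
        ≤ s r / N).card : ℝ) / N

/-- The list of values of `i`, in index order. -/
def stmtL (k : ℕ) (i : Fin k → ℕ) : List ℕ := (List.finRange k).map i

/-- Canonical duplicate-free list of values of `i`, starting with `i 0`. -/
def stmtDlist (k : ℕ) (i : Fin k → ℕ) : List ℕ :=
  (stmtL k i).headD 0 :: ((stmtL k i).dedup.erase ((stmtL k i).headD 0))

/-- Canonical injective tuple associated to `i`. -/
def stmtF (k m : ℕ) (i : Fin k → ℕ) : Fin m → ℕ := fun p => (stmtDlist k i).getD p.1 0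

lemma stmtL_length (k : ℕ) (i : Fin k → ℕ) : (stmtL k i).length = k := by
  simp [stmtL]

lemma stmtL_getElem (k : ℕ) (i : Fin k → ℕ) (q : ℕ) (hq : q < (stmtL k i).length) :
    (stmtL k i)[q] = i ⟨q, by simpa [stmtL] using hq⟩ := by
  simp [stmtL]

lemma stmtL_headD (k : ℕ) (hk : 0 < k) (i : Fin k → ℕ) :
    (stmtL k i).headD 0 = i ⟨0, hk⟩ := by
  cases k with
  | zero => omega
  | succ n =>
    simp [stmtL, List.finRange_succ]

lemma stmt_head_mem (k : ℕ) (hk : 0 < k) (i : Fin k → ℕ) :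
    (stmtL k i).headD 0 ∈ (stmtL k i).dedup := by
  rw [List.mem_dedup, stmtL_headD k hk]
  exact List.mem_map_of_mem (f := i) (List.mem_finRange _)

lemma stmtDlist_nodup (k : ℕ) (hk : 0 < k) (i : Fin k → ℕ) : (stmtDlist k i).Nodup := by
  refine List.nodup_cons.mpr ⟨?_, (stmtL k i).nodup_dedup.erase _⟩
  intro h
  exact (((stmtL k i).nodup_dedup.mem_erase_iff.mp h).1) rfl

lemma stmtDlist_subset (k : ℕ) (hk : 0 < k) (i : Fin k → ℕ) :
    ∀ a ∈ stmtDlist k i, a ∈ stmtL k i := by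
  intro a ha
  rcases List.mem_cons.mp ha with h | h
  · rw [h]; exact List.dedup_subset _ (stmt_head_mem k hk i)
  · exact List.dedup_subset _ (List.mem_of_mem_erase h)

lemma stmtDlist_toFinset (k : ℕ) (hk : 0 < k) (i : Fin k → ℕ) :
    (stmtDlist k i).toFinset = Finset.univ.image i := by
  have h0 := stmt_head_mem k hk i
  ext a
  simp only [stmtDlist, List.toFinset_cons, Finset.mem_insert, List.mem_toFinset,
    (stmtL k i).nodup_dedup.mem_erase_iff, List.mem_dedup, Finset.mem_image,
    Finset.mem_univ, true_and]
  constructor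
  · rintro (rfl | ⟨-, h⟩)
    · rcases List.mem_map.mp (List.mem_dedup.mp h0) with ⟨p, -, hp⟩
      exact ⟨p, hp⟩
    · rcases List.mem_map.mp h with ⟨p, -, hp⟩
      exact ⟨p, hp⟩
  · rintro ⟨p, rfl⟩
    by_cases hip : i p = (stmtL k i).headD 0
    · exact Or.inl hip
    · exact Or.inr ⟨hip, List.mem_map_of_mem (f := i) (List.mem_finRange _)⟩

lemma stmtDlist_length (k : ℕ) (hk : 0 < k) (i : Fin k → ℕ) :
    (stmtDlist k i).length = (Finset.univ.image i).card := by
  rw [← stmtDlist_toFinset k hk i, List.card_toFinset,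
    (stmtDlist_nodup k hk i).dedup]

lemma stmt_key (k : ℕ) (hk : 0 < k) (i : Fin k → ℕ) (t : ℕ)
    (ht : t + 1 < (stmtDlist k i).length) :
    ∃ p : Fin k, t + 1 ≤ p.1 ∧ i p = (stmtDlist k i)[t + 1]'ht := by
  set L := stmtL k i with hL
  set l := L.dedup.erase (L.headD 0) with hl
  have hdl : stmtDlist k i = L.headD 0 :: l := rfl
  have htl : t < l.length := by
    rw [hdl, List.length_cons] at ht
    omega
  have hsub : List.Sublist l L := List.erase_sublist.trans (List.dedup_sublist _)
  obtain ⟨f, hf⟩ := List.sublist_iff_exists_orderEmbedding_getElem?_eq.mp hsub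
  have hlen : ∀ q : ℕ, (hq : q < l.length) → f q < L.length ∧ L[f q]? = some (l[q]'hq) := by
    intro q hq
    have h1 : l[q]? = some (l[q]'hq) := List.getElem?_eq_getElem hq
    have h2 := (hf q).symm.trans h1
    obtain ⟨hlt, -⟩ := List.getElem?_eq_some_iff.mp h2
    exact ⟨hlt, h2⟩
  have hf0 : 1 ≤ f 0 := by
    by_contra h
    push_neg at h
    interval_cases h0 : (f 0 : ℕ)
    have h2 := (hlen 0 (by omega)).2
    rw [h0] at h2
    have hL0 : L[0]? = some (L.headD 0) := by
      have h0lt : 0 < L.length := by rw [stmtL_length]; omega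
      rw [List.getElem?_eq_getElem h0lt]
      congr 1
      rw [stmtL_headD k hk]
      exact stmtL_getElem k i 0 h0lt
    rw [hL0] at h2
    have : L.headD 0 ∈ l := by
      have := Option.some_injective _ h2
      rw [this]
      exact List.getElem_mem _
    exact ((L.nodup_dedup.mem_erase_iff.mp this).1) rfl
  have hmono : ∀ q : ℕ, f 0 + q ≤ f q := by
    intro q
    induction q with
    | zero => omega
    | succ n ih =>
      have : f n < f (n + 1) := f.strictMono (by omega)
      omega
  have hft : t + 1 ≤ f t := by have := hmono t; omega
  have hflt : f t < k := by
    have := (hlen t htl).1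
    rwa [stmtL_length] at this
  refine ⟨⟨f t, hflt⟩, hft, ?_⟩
  have h2 := (hlen t htl).2
  have h3 : L[f t]? = some (i ⟨f t, hflt⟩) := by
    have hlt : f t < L.length := by rw [stmtL_length]; exact hflt
    rw [List.getElem?_eq_getElem hlt]
    congr 1
    exact stmtL_getElem k i (f t) hlt
  rw [h3] at h2
  have h4 : (stmtDlist k i)[t + 1]'ht = l[t]'htl := by
    simp [hdl]
  rw [h4, ← Option.some_injective _ h2]
lemma stmtF_image (k m : ℕ) (i : Fin k → ℕ) (hm : (stmtDlist k i).length = m) :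
    Finset.univ.image (stmtF k m i) = (stmtDlist k i).toFinset := by
  ext a
  simp only [Finset.mem_image, Finset.mem_univ, true_and, List.mem_toFinset]
  constructor
  · rintro ⟨p, rfl⟩
    rw [stmtF, List.getD_eq_getElem _ _ (by omega : p.1 < (stmtDlist k i).length)]
    exact List.getElem_mem _
  · intro ha
    obtain ⟨q, hq, rfl⟩ := List.mem_iff_getElem.mp ha
    exact ⟨⟨q, hm ▸ hq⟩, by rw [stmtF, List.getD_eq_getElem _ _ hq]⟩

lemma stmtF_injective (k m : ℕ) (hk : 0 < k) (i : Fin k → ℕ)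
    (hm : (stmtDlist k i).length = m) : Function.Injective (stmtF k m i) := by
  intro p q hpq
  rw [stmtF, stmtF, List.getD_eq_getElem _ _ (by omega : p.1 < (stmtDlist k i).length),
    List.getD_eq_getElem _ _ (by omega : q.1 < (stmtDlist k i).length)] at hpq
  have := ((stmtDlist_nodup k hk i).getElem_inj_iff).mp hpq
  exact Fin.ext this

lemma stmtF_zero (k m : ℕ) (hk : 0 < k) (hm : 0 < m) (i : Fin k → ℕ) :
    stmtF k m i ⟨0, hm⟩ = i ⟨0, hk⟩ := by
  rw [stmtF]
  show (stmtDlist k i).getD 0 0 = _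
  rw [stmtDlist, List.getD_cons_zero, stmtL_headD k hk]

lemma stmtF_mem (k m N : ℕ) (hk : 0 < k) (i : Fin k → ℕ)
    (hm : (stmtDlist k i).length = m) (hi : ∀ p, i p ∈ Finset.Icc 1 N) :
    ∀ p, stmtF k m i p ∈ Finset.Icc 1 N := by
  intro p
  rw [stmtF, List.getD_eq_getElem _ _ (by omega : p.1 < (stmtDlist k i).length)]
  have hmem : (stmtDlist k i)[p.1] ∈ stmtL k i :=
    stmtDlist_subset k hk i _ (List.getElem_mem _)
  obtain ⟨q, -, hq⟩ := List.mem_map.mp hmem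
  rw [← hq]
  exact hi q

noncomputable def stmtT (x : ℕ → ℝ) (k N m : ℕ) (s : Fin (k - 1) → ℝ) : ℕ :=
  ((Fintype.piFinset fun _ : Fin m => Finset.Icc 1 N).filter fun j =>
    Function.Injective j ∧ ∀ r : Fin (m - 1),
      nint (x (j ⟨0, by have := r.2; omega⟩) - x (j ⟨r.1 + 1, by have := r.2; omega⟩))
        ≤ (if h : r.1 < k - 1 then s ⟨r.1, h⟩ else 0) / N).card

set_option maxHeartbeats 1000000 in
lemma stmt_bound (k : ℕ) (hk : 2 ≤ k) (x : ℕ → ℝ) (s : Fin (k - 1) → ℝ)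
    (hmono : ∀ r r' : Fin (k - 1), r ≤ r' → s r' ≤ s r) (N : ℕ) (hN : 1 ≤ N)
    (m : ℕ) (hm1 : 1 ≤ m) (hm2 : m ≤ k - 1)
    (B : Finset (Fin k → ℕ))
    (hBsub : ∀ i ∈ B, (∀ p, i p ∈ Finset.Icc 1 N) ∧
      (∀ r : Fin (k - 1),
        nint (x (i ⟨0, by have := r.2; omega⟩) - x (i ⟨r.1 + 1, by have := r.2; omega⟩))
          ≤ s r / N)) :
    (B.filter fun i => (Finset.univ.image i).card = m).card ≤
      k ^ k * stmtT x k N m s := by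
  classical
  unfold stmtT
  have hk0 : 0 < k := by omega
  apply Finset.card_le_mul_card_image_of_maps_to (f := stmtF k m)
  · -- maps to
    intro i hi
    obtain ⟨hiB, hicard⟩ := Finset.mem_filter.mp hi
    obtain ⟨hiIcc, hiP⟩ := hBsub i hiB
    have hlen : (stmtDlist k i).length = m :=
      (stmtDlist_length k hk0 i).trans hicard
    rw [Finset.mem_filter]
    refine ⟨Fintype.mem_piFinset.mpr (stmtF_mem k m N hk0 i hlen hiIcc),
      stmtF_injective k m hk0 i hlen, ?_⟩
    intro r
    have hm0 : 0 < m := by omega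
    have hr1 : r.1 + 1 < m := by have := r.2; omega
    have h0 : stmtF k m i ⟨0, by have := r.2; omega⟩ = i ⟨0, hk0⟩ :=
      stmtF_zero k m hk0 _ i
    have hget : stmtF k m i ⟨r.1 + 1, by have := r.2; omega⟩
        = (stmtDlist k i)[r.1 + 1]'(by omega) :=
      List.getD_eq_getElem _ _ _
    obtain ⟨p, hp1, hp2⟩ := stmt_key k hk0 i r.1 (by omega)
    have hpk : 1 ≤ p.1 := by omega
    have hpk2 : p.1 - 1 < k - 1 := by have := p.2; omega
    have hpr' : p = ⟨p.1 - 1 + 1, by have := p.2; omega⟩ := Fin.ext (by simp; omega)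
    have hcond := hiP ⟨p.1 - 1, hpk2⟩
    rw [← hpr'] at hcond
    have hsle : s ⟨p.1 - 1, hpk2⟩ ≤ s ⟨r.1, by have := r.2; omega⟩ := by
      apply hmono
      rw [Fin.le_def]
      simp
      omega
    have hNpos : (0 : ℝ) < N := by exact_mod_cast hN
    rw [h0, hget, ← hp2, dif_pos (show r.1 < k - 1 by have := r.2; omega)]
    exact le_trans hcond (by gcongr)
  · -- fiber bound
    intro g hg
    have hsub : ((B.filter fun i => (Finset.univ.image i).card = m).filter
        fun i => stmtF k m i = g) ⊆
        Fintype.piFinset (fun _ : Fin k => Finset.univ.image g) := by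
      intro i hi
      obtain ⟨hiBm, hFi⟩ := Finset.mem_filter.mp hi
      obtain ⟨hiB, hicard⟩ := Finset.mem_filter.mp hiBm
      have hlen : (stmtDlist k i).length = m :=
        (stmtDlist_length k hk0 i).trans hicard
      rw [Fintype.mem_piFinset]
      intro p
      rw [← hFi, stmtF_image k m i hlen, stmtDlist_toFinset k hk0 i]
      exact Finset.mem_image_of_mem i (Finset.mem_univ p)
    calc ((B.filter fun i => (Finset.univ.image i).card = m).filter
          fun i => stmtF k m i = g).card
        ≤ (Fintype.piFinset (fun _ : Fin k => Finset.univ.image g)).card :=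
          Finset.card_le_card hsub
      _ = (Finset.univ.image g).card ^ k := by
          rw [Fintype.card_piFinset]
          simp
      _ ≤ k ^ k := by
          apply Nat.pow_le_pow_left
          calc (Finset.univ.image g).card ≤ (Finset.univ : Finset (Fin m)).card :=
              Finset.card_image_le
            _ ≤ k := by simp; omega

set_option maxHeartbeats 1000000 in
lemma stmt_count (k : ℕ) (hk : 2 ≤ k) (x : ℕ → ℝ) (s : Fin (k - 1) → ℝ)
    (hmono : ∀ r r' : Fin (k - 1), r ≤ r' → s r' ≤ s r) (N : ℕ) (hN : 1 ≤ N) :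
    ((Fintype.piFinset fun _ : Fin k => Finset.Icc 1 N).filter fun i =>
      ∀ r : Fin (k - 1),
        nint (x (i ⟨0, by have := r.2; omega⟩) - x (i ⟨r.1 + 1, by have := r.2; omega⟩))
          ≤ s r / N).card
    ≤ ((Fintype.piFinset fun _ : Fin k => Finset.Icc 1 N).filter fun i =>
      Function.Injective i ∧ ∀ r : Fin (k - 1),
        nint (x (i ⟨0, by have := r.2; omega⟩) - x (i ⟨r.1 + 1, by have := r.2; omega⟩))
          ≤ s r / N).card
    + ∑ m ∈ Finset.Icc 1 (k - 1), k ^ k * stmtT x k N m s := by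
  classical
  have hk0 : 0 < k := by omega
  set U := Fintype.piFinset fun _ : Fin k => Finset.Icc 1 N with hU
  set P : (Fin k → ℕ) → Prop := fun i =>
    ∀ r : Fin (k - 1),
      nint (x (i ⟨0, by have := r.2; omega⟩) - x (i ⟨r.1 + 1, by have := r.2; omega⟩))
        ≤ s r / N with hPdef
  set A := U.filter P with hA
  set D := U.filter (fun i => Function.Injective i ∧ P i) with hD
  set B := A.filter (fun i => ¬ Function.Injective i) with hB
  have hDA : A.filter (fun i => Function.Injective i) = D := by
    rw [hA, Finset.filter_filter, hD]
    exact Finset.filter_congr fun i _ => and_comm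
  have hAD : A.card = D.card + B.card := by
    rw [← Finset.card_filter_add_card_filter_not
      (s := A) (p := fun i => Function.Injective i), hDA]
  have hmemB : ∀ i ∈ B, (Finset.univ.image i).card ∈ Finset.Icc 1 (k - 1) := by
    intro i hi
    have hni : ¬ Function.Injective i := (Finset.mem_filter.mp hi).2
    have hle : (Finset.univ.image i).card ≤ k :=
      le_trans Finset.card_image_le (by simp)
    have hne : (Finset.univ.image i).card ≠ k := by
      intro h
      apply hni
      have hinj : Set.InjOn i ↑(Finset.univ : Finset (Fin k)) :=
        Finset.card_image_iff.mp (by rw [h]; simp)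
      intro a b hab
      exact hinj (by simp) (by simp) hab
    have hpos : 0 < (Finset.univ.image i).card := by
      rw [Finset.card_pos]
      have : Nonempty (Fin k) := ⟨⟨0, hk0⟩⟩
      exact (Finset.univ_nonempty).image i
    rw [Finset.mem_Icc]
    omega
  have hBsum : B.card = ∑ m ∈ Finset.Icc 1 (k - 1),
      (B.filter fun i => (Finset.univ.image i).card = m).card :=
    Finset.card_eq_sum_card_fiberwise hmemB
  have hbound : ∀ m ∈ Finset.Icc 1 (k - 1),
      (B.filter fun i => (Finset.univ.image i).card = m).card ≤
      k ^ k * stmtT x k N m s := by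
    intro m hm
    rw [Finset.mem_Icc] at hm
    apply stmt_bound k hk x s hmono N hN m hm.1 hm.2 B
    intro i hi
    have hiA : i ∈ A := (Finset.mem_filter.mp hi).1
    obtain ⟨hiU, hiP⟩ := Finset.mem_filter.mp hiA
    exact ⟨fun p => Fintype.mem_piFinset.mp hiU p, hiP⟩
  calc A.card = D.card + B.card := hAD
    _ ≤ _ := by
        rw [hBsum]
        exact Nat.add_le_add_left (Finset.sum_le_sum hbound) _

set_option maxHeartbeats 1000000 in
/-- For decreasing scales `s₁ ≥ … ≥ s_{k-1} > 0` there are positive integers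
`b₁,…,b_{k-1}` depending only on `k` with
`R_k^*(s₁,…,s_{k-1},N) ≤ R_k(s₁,…,s_{k-1},N) + ∑_{m=1}^{k-1} b_m·R_m(s₁,…,s_{m-1},N)`
(with the convention `R₁(N) = 1`, which holds for `Rcorr x 1 N` whenever `N ≥ 1`). -/
theorem RcorrStar_le_Rcorr_add_lower_orders
    (k : ℕ) (hk : 2 ≤ k) :
    ∃ b : ℕ → ℕ, (∀ m : ℕ, 1 ≤ m → m ≤ k - 1 → 0 < b m) ∧
      ∀ x : ℕ → ℝ, (∀ n, x n ∈ Set.Icc (0 : ℝ) 1) →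
      ∀ s : Fin (k - 1) → ℝ, (∀ r, 0 < s r) →
        (∀ r r' : Fin (k - 1), r ≤ r' → s r' ≤ s r) →
      ∀ N : ℕ, 1 ≤ N →
        RcorrStar x k N s ≤ Rcorr x k N s +
          ∑ m ∈ (Finset.Icc 1 (k - 1)).attach,
            (b m.1 : ℝ) * Rcorr x m.1 N (fun r =>
              s ⟨r.1, by
                have h1 := r.2
                have h2 := (Finset.mem_Icc.mp m.2).2
                omega⟩) := by
  refine ⟨fun _ => k ^ k, fun m _ _ => by positivity, ?_⟩
  intro x hx s hs hmono N hN
  have hNpos : (0 : ℝ) < N := by exact_mod_cast hN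

  have hsum : ∑ m ∈ (Finset.Icc 1 (k - 1)).attach,
      ((k ^ k : ℕ) : ℝ) * Rcorr x m.1 N (fun r =>
        s ⟨r.1, by
          have h1 := r.2
          have h2 := (Finset.mem_Icc.mp m.2).2
          omega⟩)
      = ∑ m ∈ Finset.Icc 1 (k - 1), ((k ^ k * stmtT x k N m s : ℕ) : ℝ) / N := by
    refine Eq.trans (Finset.sum_congr rfl ?_)
      (Finset.sum_attach (Finset.Icc 1 (k - 1))
        (fun mv => ((k ^ k * stmtT x k N mv s : ℕ) : ℝ) / N))
    intro m hm
    show _ = ((k ^ k * stmtT x k N m.1 s : ℕ) : ℝ) / N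
    have hfil : ((Fintype.piFinset fun _ : Fin m.1 => Finset.Icc 1 N).filter fun j =>
          Function.Injective j ∧ ∀ r : Fin (m.1 - 1),
            nint (x (j ⟨0, by have := r.2; omega⟩) - x (j ⟨r.1 + 1, by have := r.2; omega⟩))
              ≤ s ⟨r.1, by
                  have h1 := r.2
                  have h2 := (Finset.mem_Icc.mp m.2).2
                  omega⟩ / N)
        = ((Fintype.piFinset fun _ : Fin m.1 => Finset.Icc 1 N).filter fun j =>
          Function.Injective j ∧ ∀ r : Fin (m.1 - 1),
            nint (x (j ⟨0, by have := r.2; omega⟩) - x (j ⟨r.1 + 1, by have := r.2; omega⟩))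
              ≤ (if h : r.1 < k - 1 then s ⟨r.1, h⟩ else 0) / N) := by
      refine Finset.filter_congr fun j _ => and_congr_right fun _ => forall_congr' fun r => ?_
      rw [dif_pos (show r.1 < k - 1 by
        have h1 := r.2
        have h2 := (Finset.mem_Icc.mp m.2).2
        omega)]
    unfold Rcorr
    rw [hfil]
    show (↑(k ^ k) * (((stmtT x k N m.1 s : ℕ) : ℝ) / N) : ℝ) = _
    push_cast
    ring
  have key := stmt_count k hk x s hmono N hN
  beta_reduce
  rw [hsum]
  unfold RcorrStar Rcorr
  rw [← Finset.sum_div, ← add_div]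
  have hle : (0:ℝ) ≤ N := le_of_lt hNpos
  gcongr
  exact_mod_cast key
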